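/- Let q = p^r be a prime power and let ℓ ≥ 1 be an integer. Let t = ⌈log_p(ℓ+1)⌉ be the least non-negative integer with p^t ≥ ℓ + 1. Then p^t is the least positive integer e with the following property: for every monic polynomial A ∈ F_q[T], say of degree m, the coefficient of T^{em−j} in A^e vanishes for every integer j with 1 ≤ j ≤ min(ℓ, em). (Equivalently, the group of monic polynomials in F_q[T] modulo agreement of the first ℓ next-to-leading coefficients has exponent p^{⌈log_p(ℓ+1)⌉}.) -/

import Mathlib

open Polynomial

lemma not_dvd_choose_pow_padicValNat (p : ℕ) (hp : p.Prime) :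
    ∀ (v e : ℕ), p ^ v ∣ e → ¬ p ^ (v + 1) ∣ e → ¬ p ∣ e.choose (p ^ v) := by
  haveI : Fact p.Prime := ⟨hp⟩
  intro v
  induction v with
  | zero =>
    intro e _ h2 hdvd
    simp only [pow_zero, zero_add, pow_one, Nat.choose_one_right] at *
    exact h2 hdvd
  | succ v ih =>
    intro e h1 h2 hdvd
    obtain ⟨e', rfl⟩ : p ∣ e := (dvd_pow_self p (Nat.succ_ne_zero v)).trans h1
    have h1' : p ^ v ∣ e' := by
      rcases h1 with ⟨c, hc⟩
      exact ⟨c, by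
        have hp0 : 0 < p := hp.pos
        have : p * e' = p * (p ^ v * c) := by rw [hc]; ring
        exact Nat.eq_of_mul_eq_mul_left hp0 this⟩
    have h2' : ¬ p ^ (v + 1) ∣ e' := fun ⟨c, hc⟩ => h2 ⟨c, by rw [hc]; ring⟩
    have lucas := @Choose.choose_modEq_choose_mod_mul_choose_div_nat (p * e') (p ^ (v + 1)) p _
    have hn : (p * e') % p = 0 := Nat.mul_mod_right p e'
    have hk : (p ^ (v + 1)) % p = 0 := by
      simp [pow_succ, Nat.mul_mod_left]
    have hnd : (p * e') / p = e' := Nat.mul_div_cancel_left e' hp.pos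
    have hkd : (p ^ (v + 1)) / p = p ^ v := by
      rw [pow_succ, Nat.mul_div_cancel _ hp.pos]
    rw [hn, hk, hnd, hkd, Nat.choose_self, one_mul] at lucas
    have : p ∣ e'.choose (p ^ v) := by
      have := (Nat.modEq_zero_iff_dvd).2 hdvd |>.symm.trans lucas
      exact (Nat.modEq_zero_iff_dvd).1 this.symm
    exact ih e' h1' h2' this

/-- For `q = p^r` and `ℓ ≥ 1`, with `t = ⌈log_p(ℓ+1)⌉` the least
non-negative integer such that `p^t ≥ ℓ+1`, the number `p^t` is the least positive
integer `e` such that for every monic `A ∈ F_q[T]` of degree `m`, the coefficient of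
`T^{em−j}` in `A^e` vanishes for all `1 ≤ j ≤ min(ℓ, em)`; i.e. the group of monic
polynomials modulo agreement of the first `ℓ` next-to-leading coefficients has
exponent `p^t`. -/
theorem exponent_of_shortIntervalGroup (p r L : ℕ) (hp : p.Prime) (hr : 1 ≤ r)
    (hL : 1 ≤ L)
    {F : Type} [Field F] [Fintype F] (hF : Fintype.card F = p ^ r)
    (t : ℕ) (ht1 : L + 1 ≤ p ^ t) (ht2 : ∀ s : ℕ, L + 1 ≤ p ^ s → t ≤ s) :
    IsLeast {e : ℕ | 0 < e ∧ ∀ A : F[X], A.Monic →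
        ∀ j : ℕ, 1 ≤ j → j ≤ min L (e * A.natDegree) →
          (A ^ e).coeff (e * A.natDegree - j) = 0} (p ^ t) := by
  haveI : Fact p.Prime := ⟨hp⟩
  -- characteristic of F is p
  have hchar : CharP F p := by
    have hc := CharP.char_is_prime F (ringChar F)
    haveI : CharP F (ringChar F) := ringChar.charP F
    obtain ⟨n, hprime, hcard⟩ := FiniteField.card F (ringChar F)
    have hdvd : ringChar F ∣ p ^ r := by
      rw [← hF, hcard]; exact dvd_pow_self _ (by positivity)
    have : ringChar F = p := ((Nat.prime_dvd_prime_iff_eq hc hp).1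
      (hc.dvd_of_dvd_pow hdvd))
    exact this ▸ ringChar.charP F
  haveI := hchar
  constructor
  · refine ⟨pow_pos hp.pos t, ?_⟩
    intro A hA j hj1 hj2
    have hjL : j ≤ L := le_trans hj2 (min_le_left _ _)
    have hjm : j ≤ p ^ t * A.natDegree := le_trans hj2 (min_le_right _ _)
    rw [← map_iterateFrobenius_expand (p := p) A t, coeff_map, coeff_expand (pow_pos hp.pos t)]
    have hnd : ¬ p ^ t ∣ p ^ t * A.natDegree - j := by
      intro hdvd
      have h1 : p ^ t ∣ p ^ t * A.natDegree := Dvd.intro _ rfl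
      have h2 : p ^ t ∣ j := by
        have := Nat.dvd_sub h1 hdvd
        rwa [Nat.sub_sub_self hjm] at this
      have := Nat.le_of_dvd (by omega) h2
      omega
    rw [if_neg hnd]
    simp
  · rintro e ⟨he, hprop⟩
    set v := padicValNat p e with hv
    have hpv : p ^ v ∣ e := pow_padicValNat_dvd
    have hpve : p ^ v ≤ e := Nat.le_of_dvd he hpv
    by_cases hLe : p ^ v ≤ L
    · exfalso
      have hmonic : (X + 1 : F[X]).Monic := by
        simpa using (monic_X_add_C (1 : F))
      have hdeg : (X + 1 : F[X]).natDegree = 1 := by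
        simpa using natDegree_X_add_C (1 : F)
      have := hprop (X + 1) hmonic (p ^ v) (Nat.one_le_iff_ne_zero.2 (pow_ne_zero v hp.ne_zero))
        (by rw [hdeg, mul_one]; exact le_min hLe hpve)
      rw [hdeg, mul_one, coeff_X_add_one_pow, Nat.choose_symm hpve] at this
      · have hdvd : p ∣ e.choose (p ^ v) := (CharP.cast_eq_zero_iff F p _).1 this
        exact not_dvd_choose_pow_padicValNat p hp v e hpv
          (pow_succ_padicValNat_not_dvd he.ne') hdvd

    · have : L + 1 ≤ p ^ v := by omega
      calc p ^ t ≤ p ^ v := Nat.pow_le_pow_right hp.pos (ht2 v this)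
        _ ≤ e := hpve
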